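/- Let R ∈ Matrix (Fin m) (Fin m) ℝ be symmetric positive definite, B ∈ Matrix (Fin c) (Fin m) ℝ, ρ ∈ Fin c → ℝ, and μ ∈ Fin m → ℝ. Define u⋆ = μ - R⁻¹.mulVec (Bᵀ.mulVec ρ). Then the mode insertion gradient satisfies ρ ⬝ᵥ (B.mulVec (u⋆ - μ)) = -(Bᵀ.mulVec ρ) ⬝ᵥ (R⁻¹.mulVec (Bᵀ.mulVec ρ)) ≤ 0, with equality iff Bᵀ.mulVec ρ = 0. -/
import Mathlib


open Matrix

theorem mode_insertion_gradient_nonpos (m c : ℕ)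
    (R : Matrix (Fin m) (Fin m) ℝ) (hR : R.PosDef)
    (B : Matrix (Fin c) (Fin m) ℝ) (ρ : Fin c → ℝ) (μ : Fin m → ℝ) :
    let ustar : Fin m → ℝ := μ - R⁻¹.mulVec (Bᵀ.mulVec ρ)
    ρ ⬝ᵥ B.mulVec (ustar - μ) = -((Bᵀ.mulVec ρ) ⬝ᵥ R⁻¹.mulVec (Bᵀ.mulVec ρ)) ∧
    ρ ⬝ᵥ B.mulVec (ustar - μ) ≤ 0 ∧
    (ρ ⬝ᵥ B.mulVec (ustar - μ) = 0 ↔ Bᵀ.mulVec ρ = 0) := by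
  intro ustar
  have hinv : (R⁻¹).PosDef := hR.inv
  set w : Fin m → ℝ := Bᵀ.mulVec ρ with hw
  have hsub : ustar - μ = -(R⁻¹.mulVec w) := by
    simp only [ustar, hw]; abel
  have key : ρ ⬝ᵥ B.mulVec (ustar - μ) = -(w ⬝ᵥ R⁻¹.mulVec w) := by
    rw [hsub, mulVec_neg, dotProduct_neg, Matrix.dotProduct_mulVec,
      ← Matrix.mulVec_transpose]
  refine ⟨key, ?_, ?_⟩
  · rw [key, neg_nonpos]
    simpa using hinv.posSemidef.re_dotProduct_nonneg w
  · rw [key, neg_eq_zero]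
    constructor
    · intro h
      by_contra hne
      have := hinv.re_dotProduct_pos hne
      simp only [RCLike.re_to_real] at this
      exact this.ne' h
    · intro h; simp [h]
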